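/- arXiv:1709.07743 — 4 statements merged into one kernel-verified Lean document; each statement's English description precedes it below -/
import Mathlib

section
/- Fix M_T ∈ ℕ, Δt > 0, N ∈ ℕ, nonempty sets 𝒜, ℬ, and a constant A ≥ 0. For each n ∈ {1,…,M_T}, j̄ ∈ ℤ^N, (α,β) ∈ 𝒜×ℬ, let a^{n,n}_{j̄,j}(α,β) ≥ 0 for j ∈ ℤ^N∖{0} and a^{n,n−1}_{j̄,j}(α,β) ≥ 0 for j ∈ ℤ^N be given with: (i) (a^{n,n}_{j̄,j}(α,β))_{j≠0} summable with Σ_{j≠0} a^{n,n}_{j̄,j}(α,β) ≤ A; (ii) Σ_{j∈ℤ^N} a^{n,n−1}_{j̄,j}(α,β) ≤ 1; set a^{n,n}_{j̄,0}(α,β) := 1 + Σ_{j≠0} a^{n,n}_{j̄,j}(α,β). Let f^n_{j̄}(α,β) be uniformly bounded. Suppose U, V : {0,…,M_T} × ℤ^N → ℝ are bounded, U⁰_{j̄} ≤ V⁰_{j̄} for all j̄, and for every n ≥ 1 and j̄: inf_{α∈𝒜} sup_{β∈ℬ} { a^{n,n}_{j̄,0}(α,β) Uⁿ_{j̄} −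 Σ_{j≠0} a^{n,n}_{j̄,j}(α,β) Uⁿ_{j̄+j} − Σ_{j} a^{n,n−1}_{j̄,j}(α,β) U^{n−1}_{j̄+j} − Δt f^n_{j̄}(α,β) } ≤ 0, while the corresponding expression with U replaced by V is ≥ 0. Then Uⁿ_{j̄} ≤ Vⁿ_{j̄} for all n ∈ {0,…,M_T} and j̄ ∈ ℤ^N. -/
lemma aux_summable {ι : Type*} {a g : ι → ℝ} {R : ℝ}
    (ha : ∀ i, 0 ≤ a i) (hs : Summable a) (hg : ∀ i, |g i| ≤ R) :
    Summable (fun i => a i * g i) := by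
  apply Summable.of_norm_bounded (hs.mul_right R)
  intro i
  rw [Real.norm_eq_abs, abs_mul, abs_of_nonneg (ha i)]
  exact mul_le_mul_of_nonneg_left (hg i) (ha i)

lemma aux_tsum_le {ι : Type*} {a g : ι → ℝ} {R m : ℝ}
    (ha : ∀ i, 0 ≤ a i) (hs : Summable a) (hg : ∀ i, |g i| ≤ R)
    (hgm : ∀ i, g i ≤ m) :
    (∑' i, a i * g i) ≤ (∑' i, a i) * m := by
  rw [← tsum_mul_right]
  exact Summable.tsum_le_tsum (fun i => mul_le_mul_of_nonneg_left (hgm i) (ha i))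
    (aux_summable ha hs hg) (hs.mul_right m)

lemma aux_abs_tsum {ι : Type*} {a g : ι → ℝ} {R : ℝ}
    (ha : ∀ i, 0 ≤ a i) (hs : Summable a) (hg : ∀ i, |g i| ≤ R) :
    |∑' i, a i * g i| ≤ (∑' i, a i) * R := by
  have h1 : (∑' i, a i * g i) ≤ (∑' i, a i) * R :=
    aux_tsum_le ha hs hg (fun i => (abs_le.mp (hg i)).2)
  have h2 : (∑' i, a i * (-g i)) ≤ (∑' i, a i) * R :=
    aux_tsum_le ha hs (g := fun i => -g i) (by simpa using hg)
      (fun i => by show -g i ≤ R; have := (abs_le.mp (hg i)).1; linarith)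
  have h3 : (∑' i, a i * (-g i)) = -(∑' i, a i * g i) := by
    simp [mul_neg, tsum_neg]
  rw [abs_le]
  constructor
  · rw [h3] at h2; linarith
  · exact h1

lemma infsup_extract {𝒜 ℬ : Type} [Nonempty 𝒜] [Nonempty ℬ]
    (P Q : 𝒜 → ℬ → ℝ) (C : ℝ)
    (hP : ∀ α β, |P α β| ≤ C) (hQ : ∀ α β, |Q α β| ≤ C)
    (h1 : (⨅ α, ⨆ β, P α β) ≤ 0) (h2 : (0:ℝ) ≤ ⨅ α, ⨆ β, Q α β)
    {ε : ℝ} (hε : 0 < ε) : ∃ α β, P α β - Q α β ≤ ε := by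
  have bP : ∀ α, BddAbove (Set.range (P α)) := fun α =>
    ⟨C, by rintro _ ⟨β, rfl⟩; exact (abs_le.mp (hP α β)).2⟩
  have bQ : ∀ α, BddAbove (Set.range (Q α)) := fun α =>
    ⟨C, by rintro _ ⟨β, rfl⟩; exact (abs_le.mp (hQ α β)).2⟩
  have hlt : (⨅ α, ⨆ β, P α β) < ε/2 := lt_of_le_of_lt h1 (by linarith)
  obtain ⟨α, hα⟩ := exists_lt_of_ciInf_lt hlt
  have bdd : BddBelow (Set.range (fun α => ⨆ β, Q α β)) := by
    refine ⟨-C, ?_⟩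
    rintro _ ⟨α', rfl⟩
    obtain ⟨β₀⟩ := ‹Nonempty ℬ›
    exact le_trans (abs_le.mp (hQ α' β₀)).1 (le_ciSup (bQ α') β₀)
  have hQα : (0:ℝ) ≤ ⨆ β, Q α β := le_trans h2 (ciInf_le bdd α)
  obtain ⟨β, hβ⟩ := exists_lt_of_lt_ciSup (show -(ε/2) < ⨆ β, Q α β by linarith)
  have hPb : P α β ≤ ⨆ β', P α β' := le_ciSup (bP α) β
  exact ⟨α, β, by linarith⟩

lemma phi_bound {S T T' u fv A R F Δt : ℝ} (hS0 : 0 ≤ S) (hSA : S ≤ A)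
    (hT : |T| ≤ A*R) (hT' : |T'| ≤ R) (hu : |u| ≤ R) (hR : 0 ≤ R)
    (hf : |fv| ≤ F) (hΔt : 0 < Δt) :
    |(1+S)*u - T - T' - Δt*fv| ≤ (1+A)*R + A*R + R + Δt*F := by
  have h1 : |(1+S)*u| ≤ (1+A)*R := by
    rw [abs_mul, abs_of_nonneg (by linarith : (0:ℝ) ≤ 1+S)]
    nlinarith [abs_nonneg u]
  have hfa : |Δt*fv| ≤ Δt*F := by
    rw [abs_mul, abs_of_pos hΔt]
    nlinarith [abs_nonneg fv]
  have e1 := abs_le.mp h1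
  have e2 := abs_le.mp hT
  have e3 := abs_le.mp hT'
  have e4 := abs_le.mp hfa
  rw [abs_le]
  constructor <;> linarith


open MeasureTheory

/-- comparison principle for the implicit-explicit
difference-quadrature scheme with nonnegative coefficients. -/
theorem scheme_comparison_principle
    (MT N : ℕ) (Δt : ℝ) (hΔt : 0 < Δt)
    (𝒜 ℬ : Type) [Nonempty 𝒜] [Nonempty ℬ] (A : ℝ) (hA : 0 ≤ A)
    (ann anm : ℕ → (Fin N → ℤ) → (Fin N → ℤ) → 𝒜 → ℬ → ℝ)
    (f : ℕ → (Fin N → ℤ) → 𝒜 → ℬ → ℝ)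
    (hannpos : ∀ n, 1 ≤ n → n ≤ MT → ∀ jb j α β, j ≠ 0 → 0 ≤ ann n jb j α β)
    (hanmpos : ∀ n, 1 ≤ n → n ≤ MT → ∀ jb j α β, 0 ≤ anm n jb j α β)
    (hannsum : ∀ n, 1 ≤ n → n ≤ MT → ∀ jb α β,
      Summable (fun j : {j : Fin N → ℤ // j ≠ 0} => ann n jb j.1 α β) ∧
      ∑' j : {j : Fin N → ℤ // j ≠ 0}, ann n jb j.1 α β ≤ A)
    (hanmsum : ∀ n, 1 ≤ n → n ≤ MT → ∀ jb α β,
      Summable (fun j : Fin N → ℤ => anm n jb j α β) ∧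
      ∑' j : Fin N → ℤ, anm n jb j α β ≤ 1)
    (hf : ∃ F : ℝ, ∀ n jb α β, |f n jb α β| ≤ F)
    (U V : ℕ → (Fin N → ℤ) → ℝ)
    (hUb : ∃ R : ℝ, ∀ n jb, |U n jb| ≤ R) (hVb : ∃ R : ℝ, ∀ n jb, |V n jb| ≤ R)
    (h0 : ∀ jb, U 0 jb ≤ V 0 jb)
    (hsub : ∀ n, 1 ≤ n → n ≤ MT → ∀ jb,
      (⨅ α : 𝒜, ⨆ β : ℬ,
        ((1 + ∑' j : {j : Fin N → ℤ // j ≠ 0}, ann n jb j.1 α β) * U n jb -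
          (∑' j : {j : Fin N → ℤ // j ≠ 0}, ann n jb j.1 α β * U n (jb + j.1)) -
          (∑' j : Fin N → ℤ, anm n jb j α β * U (n - 1) (jb + j)) -
          Δt * f n jb α β)) ≤ 0)
    (hsup : ∀ n, 1 ≤ n → n ≤ MT → ∀ jb,
      (0 : ℝ) ≤ ⨅ α : 𝒜, ⨆ β : ℬ,
        ((1 + ∑' j : {j : Fin N → ℤ // j ≠ 0}, ann n jb j.1 α β) * V n jb -
          (∑' j : {j : Fin N → ℤ // j ≠ 0}, ann n jb j.1 α β * V n (jb + j.1)) -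
          (∑' j : Fin N → ℤ, anm n jb j α β * V (n - 1) (jb + j)) -
          Δt * f n jb α β)) :
    ∀ n, n ≤ MT → ∀ jb, U n jb ≤ V n jb := by
  classical
  obtain ⟨R₀, hR₀⟩ := hUb
  obtain ⟨R₁, hR₁⟩ := hVb
  obtain ⟨F₀, hF₀⟩ := hf
  set R : ℝ := |R₀| + |R₁| with hRdef
  have hR : 0 ≤ R := by positivity
  have hU' : ∀ k jb, |U k jb| ≤ R := fun k jb =>
    le_trans (hR₀ k jb) (le_trans (le_abs_self R₀) (le_add_of_nonneg_right (abs_nonneg _)))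
  have hV' : ∀ k jb, |V k jb| ≤ R := fun k jb =>
    le_trans (hR₁ k jb) (le_trans (le_abs_self R₁) (le_add_of_nonneg_left (abs_nonneg _)))
  have hf' : ∀ k jb α β, |f k jb α β| ≤ |F₀| := fun k jb α β =>
    le_trans (hF₀ k jb α β) (le_abs_self F₀)
  set C : ℝ := (1+A)*R + A*R + R + Δt*|F₀| with hCdef
  intro n
  induction n with
  | zero => intro _ jb; exact h0 jb
  | succ n ih =>
    intro hn
    have hprev : ∀ jb, U n jb ≤ V n jb := ih (by omega)
    have hn1 : 1 ≤ n + 1 := by omega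
    -- boundedness of differences
    have hWb : ∀ jb, U (n+1) jb - V (n+1) jb ≤ R + R := fun jb => by
      have := abs_le.mp (hU' (n+1) jb); have := abs_le.mp (hV' (n+1) jb); linarith
    have bddW : BddAbove (Set.range (fun jb => U (n+1) jb - V (n+1) jb)) :=
      ⟨R + R, by rintro _ ⟨jb, rfl⟩; exact hWb jb⟩
    set m : ℝ := ⨆ jb, (U (n+1) jb - V (n+1) jb) with hmdef
    have hle : ∀ jb, U (n+1) jb - V (n+1) jb ≤ m := fun jb => le_ciSup bddW jb
    have hm0 : m ≤ 0 := by
      by_contra hc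
      push_neg at hc
      set δ : ℝ := m / (2*(A+2)) with hδdef
      have hδ0 : 0 < δ := div_pos hc (by linarith)
      have hmm : m - δ < m := by linarith
      obtain ⟨jb, hjb⟩ := exists_lt_of_lt_ciSup (hmdef ▸ hmm)
      have h1 := hsub (n+1) hn1 hn jb
      have h2 := hsup (n+1) hn1 hn jb
      simp only [Nat.add_sub_cancel] at h1 h2
      -- bounds on the scheme expressions
      have hPbd : ∀ (W : ℕ → (Fin N → ℤ) → ℝ), (∀ k jb, |W k jb| ≤ R) → ∀ α β,
          |(1 + ∑' j : {j : Fin N → ℤ // j ≠ 0}, ann (n+1) jb j.1 α β) * W (n+1) jb -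
            (∑' j : {j : Fin N → ℤ // j ≠ 0}, ann (n+1) jb j.1 α β * W (n+1) (jb + j.1)) -
            (∑' j : Fin N → ℤ, anm (n+1) jb j α β * W n (jb + j)) -
            Δt * f (n+1) jb α β| ≤ C := by
        intro W hW α β
        obtain ⟨hsm, hsA⟩ := hannsum (n+1) hn1 hn jb α β
        obtain ⟨hsm', hs1⟩ := hanmsum (n+1) hn1 hn jb α β
        have hann0 : ∀ j : {j : Fin N → ℤ // j ≠ 0}, 0 ≤ ann (n+1) jb j.1 α β :=
          fun j => hannpos (n+1) hn1 hn jb j.1 α β j.2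
        have hanm0 : ∀ j : Fin N → ℤ, 0 ≤ anm (n+1) jb j α β :=
          fun j => hanmpos (n+1) hn1 hn jb j α β
        have hS0 : 0 ≤ ∑' j : {j : Fin N → ℤ // j ≠ 0}, ann (n+1) jb j.1 α β :=
          tsum_nonneg hann0
        have hS0' : 0 ≤ ∑' j : Fin N → ℤ, anm (n+1) jb j α β := tsum_nonneg hanm0
        have hT : |∑' j : {j : Fin N → ℤ // j ≠ 0}, ann (n+1) jb j.1 α β * W (n+1) (jb + j.1)| ≤ A * R := by
          refine le_trans (aux_abs_tsum hann0 hsm (fun j => hW (n+1) (jb + j.1))) ?_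
          exact mul_le_mul_of_nonneg_right hsA hR
        have hT' : |∑' j : Fin N → ℤ, anm (n+1) jb j α β * W n (jb + j)| ≤ R := by
          refine le_trans (aux_abs_tsum hanm0 hsm' (fun j => hW n (jb + j))) ?_
          nlinarith
        exact phi_bound hS0 hsA hT hT' (hW (n+1) jb) hR (hf' (n+1) jb α β) hΔt
      obtain ⟨α, β, hαβ⟩ := infsup_extract _ _ C (hPbd U hU') (hPbd V hV') h1 h2 hδ0
      -- unpack the chosen α β
      obtain ⟨hsm, hsA⟩ := hannsum (n+1) hn1 hn jb α β
      obtain ⟨hsm', hs1⟩ := hanmsum (n+1) hn1 hn jb α β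
      have hann0 : ∀ j : {j : Fin N → ℤ // j ≠ 0}, 0 ≤ ann (n+1) jb j.1 α β :=
        fun j => hannpos (n+1) hn1 hn jb j.1 α β j.2
      have hanm0 : ∀ j : Fin N → ℤ, 0 ≤ anm (n+1) jb j α β :=
        fun j => hanmpos (n+1) hn1 hn jb j α β
      have hS0 : 0 ≤ ∑' j : {j : Fin N → ℤ // j ≠ 0}, ann (n+1) jb j.1 α β :=
        tsum_nonneg hann0
      have hsumU : Summable (fun j : {j : Fin N → ℤ // j ≠ 0} =>
          ann (n+1) jb j.1 α β * U (n+1) (jb + j.1)) :=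
        aux_summable hann0 hsm (fun j => hU' (n+1) (jb + j.1))
      have hsumV : Summable (fun j : {j : Fin N → ℤ // j ≠ 0} =>
          ann (n+1) jb j.1 α β * V (n+1) (jb + j.1)) :=
        aux_summable hann0 hsm (fun j => hV' (n+1) (jb + j.1))
      have hsumU' : Summable (fun j : Fin N → ℤ => anm (n+1) jb j α β * U n (jb + j)) :=
        aux_summable hanm0 hsm' (fun j => hU' n (jb + j))
      have hsumV' : Summable (fun j : Fin N → ℤ => anm (n+1) jb j α β * V n (jb + j)) :=
        aux_summable hanm0 hsm' (fun j => hV' n (jb + j))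
      have hdiff1 : (∑' j : {j : Fin N → ℤ // j ≠ 0}, ann (n+1) jb j.1 α β * U (n+1) (jb + j.1)) -
          (∑' j : {j : Fin N → ℤ // j ≠ 0}, ann (n+1) jb j.1 α β * V (n+1) (jb + j.1)) =
          ∑' j : {j : Fin N → ℤ // j ≠ 0}, ann (n+1) jb j.1 α β * (U (n+1) (jb + j.1) - V (n+1) (jb + j.1)) := by
        rw [← Summable.tsum_sub hsumU hsumV]
        congr 1; funext j; ring
      have hdiff2 : (∑' j : Fin N → ℤ, anm (n+1) jb j α β * U n (jb + j)) -
          (∑' j : Fin N → ℤ, anm (n+1) jb j α β * V n (jb + j)) =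
          ∑' j : Fin N → ℤ, anm (n+1) jb j α β * (U n (jb + j) - V n (jb + j)) := by
        rw [← Summable.tsum_sub hsumU' hsumV']
        congr 1; funext j; ring
      have hWabs : ∀ jb' : Fin N → ℤ, |U (n+1) jb' - V (n+1) jb'| ≤ R + R := by
        intro jb'
        have e1 := abs_le.mp (hU' (n+1) jb')
        have e2 := abs_le.mp (hV' (n+1) jb')
        rw [abs_le]
        constructor <;> linarith
      have hbd1 : (∑' j : {j : Fin N → ℤ // j ≠ 0}, ann (n+1) jb j.1 α β *
          (U (n+1) (jb + j.1) - V (n+1) (jb + j.1))) ≤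
          (∑' j : {j : Fin N → ℤ // j ≠ 0}, ann (n+1) jb j.1 α β) * m :=
        aux_tsum_le hann0 hsm (R := R + R)
          (fun j => hWabs (jb + j.1))
          (fun j => hle (jb + j.1))
      have hbd2 : (∑' j : Fin N → ℤ, anm (n+1) jb j α β * (U n (jb + j) - V n (jb + j))) ≤ 0 := by
        apply tsum_nonpos
        intro j
        have h := hprev (jb + j)
        have := mul_le_mul_of_nonneg_left (sub_nonpos.mpr h) (hanm0 j)
        simpa using this
      set S : ℝ := ∑' j : {j : Fin N → ℤ // j ≠ 0}, ann (n+1) jb j.1 α β with hSdef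
      have hkey : (1+S) * (U (n+1) jb - V (n+1) jb) ≤ S * m + δ := by
        have expand : (1+S) * (U (n+1) jb - V (n+1) jb) =
            ((1+S) * U (n+1) jb -
              (∑' j : {j : Fin N → ℤ // j ≠ 0}, ann (n+1) jb j.1 α β * U (n+1) (jb + j.1)) -
              (∑' j : Fin N → ℤ, anm (n+1) jb j α β * U n (jb + j)) - Δt * f (n+1) jb α β) -
            ((1+S) * V (n+1) jb -
              (∑' j : {j : Fin N → ℤ // j ≠ 0}, ann (n+1) jb j.1 α β * V (n+1) (jb + j.1)) -
              (∑' j : Fin N → ℤ, anm (n+1) jb j α β * V n (jb + j)) - Δt * f (n+1) jb α β) +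
            ((∑' j : {j : Fin N → ℤ // j ≠ 0}, ann (n+1) jb j.1 α β * U (n+1) (jb + j.1)) -
              (∑' j : {j : Fin N → ℤ // j ≠ 0}, ann (n+1) jb j.1 α β * V (n+1) (jb + j.1))) +
            ((∑' j : Fin N → ℤ, anm (n+1) jb j α β * U n (jb + j)) -
              (∑' j : Fin N → ℤ, anm (n+1) jb j α β * V n (jb + j))) := by ring
        rw [expand, hdiff1, hdiff2]
        have := hαβ
        linarith [hbd1, hbd2]
      have hlow : (1+S) * (m - δ) ≤ (1+S) * (U (n+1) jb - V (n+1) jb) :=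
        mul_le_mul_of_nonneg_left (le_of_lt hjb) (by linarith)
      have hfin : m ≤ (2+A) * δ := by nlinarith
      have heq : (2+A) * δ = m / 2 := by
        rw [hδdef]; field_simp; ring
      rw [heq] at hfin
      linarith
    intro jb
    have := hle jb
    linarith [hle jb, hm0]
end

section
/- Fix M_T ∈ ℕ, Δt > 0, N ∈ ℕ, nonempty sets 𝒜, ℬ, and a constant A ≥ 0, and let the coefficients a^{n,n}_{j̄,j}(α,β) ≥ 0 (j ≠ 0), a^{n,n−1}_{j̄,j}(α,β) ≥ 0 with Σ_{j≠0} a^{n,n}_{j̄,j} ≤ A, Σ_j a^{n,n−1}_{j̄,j} ≤ 1 and a^{n,n}_{j̄,0} := 1 + Σ_{j≠0} a^{n,n}_{j̄,j} be given, together with uniformly bounded f^n_{j̄}(α,β). If U : {0,…,M_T} × ℤ^N → ℝ is a bounded solution of the scheme inf_{α} sup_{β} { a^{n,n}_{j̄,0} Uⁿ_{j̄} − Σ_{j≠0} a^{n,n}_{j̄,j} Uⁿ_{j̄+j} − Σ_j a^{n,n−1}_{j̄,j} U^{n−1}_{j̄+j} − Δt f^n_{j̄} } = 0 for all n ≥ 1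 and j̄, then for every n, sup_{j̄} |Uⁿ_{j̄}| ≤ sup_{j̄} |U⁰_{j̄}| + n Δt · sup_{m,j̄,α,β} |f^m_{j̄}(α,β)|. -/
open MeasureTheory

/-- `L^∞`-stability of the implicit-explicit
difference-quadrature scheme with nonnegative coefficients. -/
theorem scheme_linfty_stability
    (MT N : ℕ) (Δt : ℝ) (hΔt : 0 < Δt)
    (𝒜 ℬ : Type) [Nonempty 𝒜] [Nonempty ℬ] (A : ℝ) (hA : 0 ≤ A)
    (ann anm : ℕ → (Fin N → ℤ) → (Fin N → ℤ) → 𝒜 → ℬ → ℝ)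
    (f : ℕ → (Fin N → ℤ) → 𝒜 → ℬ → ℝ)
    (hannpos : ∀ n, 1 ≤ n → n ≤ MT → ∀ jb j α β, j ≠ 0 → 0 ≤ ann n jb j α β)
    (hanmpos : ∀ n, 1 ≤ n → n ≤ MT → ∀ jb j α β, 0 ≤ anm n jb j α β)
    (hannsum : ∀ n, 1 ≤ n → n ≤ MT → ∀ jb α β,
      Summable (fun j : {j : Fin N → ℤ // j ≠ 0} => ann n jb j.1 α β) ∧
      ∑' j : {j : Fin N → ℤ // j ≠ 0}, ann n jb j.1 α β ≤ A)
    (hanmsum : ∀ n, 1 ≤ n → n ≤ MT → ∀ jb α β,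
      Summable (fun j : Fin N → ℤ => anm n jb j α β) ∧
      ∑' j : Fin N → ℤ, anm n jb j α β ≤ 1)
    (U : ℕ → (Fin N → ℤ) → ℝ) (hUb : ∃ R : ℝ, ∀ n jb, |U n jb| ≤ R)
    (hsol : ∀ n, 1 ≤ n → n ≤ MT → ∀ jb,
      (⨅ α : 𝒜, ⨆ β : ℬ,
        ((1 + ∑' j : {j : Fin N → ℤ // j ≠ 0}, ann n jb j.1 α β) * U n jb -
          (∑' j : {j : Fin N → ℤ // j ≠ 0}, ann n jb j.1 α β * U n (jb + j.1)) -
          (∑' j : Fin N → ℤ, anm n jb j α β * U (n - 1) (jb + j)) -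
          Δt * f n jb α β)) = 0) :
    ∀ B₀ F : ℝ, (∀ jb, |U 0 jb| ≤ B₀) → (∀ n jb α β, |f n jb α β| ≤ F) →
      ∀ n, n ≤ MT → ∀ jb, |U n jb| ≤ B₀ + n * Δt * F := by
  intro B₀ F hB₀ hF
  obtain ⟨R, hR⟩ := hUb
  have hR0 : 0 ≤ R := le_trans (abs_nonneg _) (hR 0 0)
  have hF0 : 0 ≤ F :=
    le_trans (abs_nonneg _) (hF 0 0 (Classical.arbitrary 𝒜) (Classical.arbitrary ℬ))
  have hB00 : 0 ≤ B₀ := le_trans (abs_nonneg _) (hB₀ 0)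
  intro n
  induction n with
  | zero => intro _ jb; simpa using hB₀ jb
  | succ m ih =>
    intro hmle
    have hm : m ≤ MT := Nat.le_of_succ_le hmle
    have IH : ∀ jb, |U m jb| ≤ B₀ + m * Δt * F := ih hm
    set n := m + 1 with hn
    have hn1 : 1 ≤ n := Nat.le_add_left 1 m
    set B : ℝ := B₀ + m * Δt * F with hBdef
    have hB0 : 0 ≤ B := by positivity
    have hIH : ∀ jb, |U (n - 1) jb| ≤ B := by
      intro jb; simpa [hn] using IH jb
    -- notation for the expression
    set E : (Fin N → ℤ) → 𝒜 → ℬ → ℝ := fun jb α β =>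
      ((1 + ∑' j : {j : Fin N → ℤ // j ≠ 0}, ann n jb j.1 α β) * U n jb -
        (∑' j : {j : Fin N → ℤ // j ≠ 0}, ann n jb j.1 α β * U n (jb + j.1)) -
        (∑' j : Fin N → ℤ, anm n jb j α β * U (n - 1) (jb + j)) -
        Δt * f n jb α β) with hE
    -- basic summability facts
    have hannS : ∀ jb α β, Summable (fun j : {j : Fin N → ℤ // j ≠ 0} => ann n jb j.1 α β) :=
      fun jb α β => (hannsum n hn1 hmle jb α β).1
    have hannA : ∀ jb α β, (∑' j : {j : Fin N → ℤ // j ≠ 0}, ann n jb j.1 α β) ≤ A :=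
      fun jb α β => (hannsum n hn1 hmle jb α β).2
    have hann0 : ∀ jb (j : {j : Fin N → ℤ // j ≠ 0}) α β, 0 ≤ ann n jb j.1 α β :=
      fun jb j α β => hannpos n hn1 hmle jb j.1 α β j.2
    have hanmS : ∀ jb α β, Summable (fun j : Fin N → ℤ => anm n jb j α β) :=
      fun jb α β => (hanmsum n hn1 hmle jb α β).1
    have hanm1 : ∀ jb α β, (∑' j : Fin N → ℤ, anm n jb j α β) ≤ 1 :=
      fun jb α β => (hanmsum n hn1 hmle jb α β).2
    have hanm0 : ∀ jb j α β, 0 ≤ anm n jb j α β :=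
      fun jb j α β => hanmpos n hn1 hmle jb j α β
    have hT0 : ∀ jb α β, 0 ≤ ∑' j : {j : Fin N → ℤ // j ≠ 0}, ann n jb j.1 α β :=
      fun jb α β => tsum_nonneg (fun j => hann0 jb j α β)
    -- summability of products with U
    have hannUS : ∀ jb α β (c : ℝ), (∀ x, |U n x| ≤ c) →
        Summable (fun j : {j : Fin N → ℤ // j ≠ 0} => ann n jb j.1 α β * U n (jb + j.1)) := by
      intro jb α β c hc
      apply Summable.of_abs
      apply Summable.of_nonneg_of_le (fun j => abs_nonneg _)
        (f := fun j : {j : Fin N → ℤ // j ≠ 0} => ann n jb j.1 α β * c)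
      · intro j
        rw [abs_mul, abs_of_nonneg (hann0 jb j α β)]
        exact mul_le_mul_of_nonneg_left (hc _) (hann0 jb j α β)
      · exact (hannS jb α β).mul_right c
    have hanmUS : ∀ jb α β,
        Summable (fun j : Fin N → ℤ => anm n jb j α β * U (n - 1) (jb + j)) := by
      intro jb α β
      apply Summable.of_abs
      apply Summable.of_nonneg_of_le (fun j => abs_nonneg _)
        (f := fun j : Fin N → ℤ => anm n jb j α β * R)
      · intro j
        rw [abs_mul, abs_of_nonneg (hanm0 jb j α β)]
        exact mul_le_mul_of_nonneg_left (hR _ _) (hanm0 jb j α β)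
      · exact (hanmS jb α β).mul_right R
    have hUR : ∀ x, |U n x| ≤ R := fun x => hR n x
    -- two-sided bounds for the tsums
    have hPle : ∀ jb α β (c : ℝ), (∀ x, U n x ≤ c) →
        (∑' j : {j : Fin N → ℤ // j ≠ 0}, ann n jb j.1 α β * U n (jb + j.1)) ≤
          (∑' j : {j : Fin N → ℤ // j ≠ 0}, ann n jb j.1 α β) * c := by
      intro jb α β c hc
      rw [← tsum_mul_right]
      refine Summable.tsum_le_tsum (fun j => mul_le_mul_of_nonneg_left (hc _) (hann0 jb j α β))
        (hannUS jb α β R hUR) ((hannS jb α β).mul_right c)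
    have hPge : ∀ jb α β (c : ℝ), (∀ x, c ≤ U n x) →
        (∑' j : {j : Fin N → ℤ // j ≠ 0}, ann n jb j.1 α β) * c ≤
          (∑' j : {j : Fin N → ℤ // j ≠ 0}, ann n jb j.1 α β * U n (jb + j.1)) := by
      intro jb α β c hc
      rw [← tsum_mul_right]
      refine Summable.tsum_le_tsum (fun j => mul_le_mul_of_nonneg_left (hc _) (hann0 jb j α β))
        ((hannS jb α β).mul_right c) (hannUS jb α β R hUR)
    have hQle : ∀ jb α β,
        (∑' j : Fin N → ℤ, anm n jb j α β * U (n - 1) (jb + j)) ≤ B := by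
      intro jb α β
      have h1 : (∑' j : Fin N → ℤ, anm n jb j α β * U (n - 1) (jb + j)) ≤
          (∑' j : Fin N → ℤ, anm n jb j α β) * B := by
        rw [← tsum_mul_right]
        refine Summable.tsum_le_tsum (fun j => mul_le_mul_of_nonneg_left
          ((abs_le.1 (hIH _)).2) (hanm0 jb j α β)) (hanmUS jb α β) ((hanmS jb α β).mul_right B)
      calc _ ≤ (∑' j : Fin N → ℤ, anm n jb j α β) * B := h1
        _ ≤ 1 * B := mul_le_mul_of_nonneg_right (hanm1 jb α β) hB0
        _ = B := one_mul B
    have hQge : ∀ jb α β,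
        -B ≤ (∑' j : Fin N → ℤ, anm n jb j α β * U (n - 1) (jb + j)) := by
      intro jb α β
      have h1 : (∑' j : Fin N → ℤ, anm n jb j α β) * (-B) ≤
          (∑' j : Fin N → ℤ, anm n jb j α β * U (n - 1) (jb + j)) := by
        rw [← tsum_mul_right]
        refine Summable.tsum_le_tsum (fun j => mul_le_mul_of_nonneg_left
          (neg_le_of_abs_le (hIH _)) (hanm0 jb j α β)) ((hanmS jb α β).mul_right (-B))
          (hanmUS jb α β)
      have h2 : -B ≤ (∑' j : Fin N → ℤ, anm n jb j α β) * (-B) := by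
        nlinarith [hanm1 jb α β, (show 0 ≤ ∑' j : Fin N → ℤ, anm n jb j α β from tsum_nonneg (fun j => hanm0 jb j α β))]
      linarith
    -- uniform bound on E
    set C : ℝ := (1 + A) * R + A * R + B + Δt * F with hC
    have hEbd : ∀ jb α β, |E jb α β| ≤ C := by
      intro jb α β
      have hT := hT0 jb α β
      have hTA := hannA jb α β
      have hP1 := hPle jb α β R (fun x => (abs_le.1 (hR n x)).2)
      have hP2 := hPge jb α β (-R) (fun x => neg_le_of_abs_le (hR n x))
      have hQ1 := hQle jb α β
      have hQ2 := hQge jb α β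
      have hf := abs_le.1 (hF n jb α β)
      have hU := abs_le.1 (hR n jb)
      rw [abs_le]
      constructor <;> simp only [hE] <;> nlinarith [hΔt.le, mul_le_mul_of_nonneg_right hTA hR0]
    have hCb : ∀ jb α, BddAbove (Set.range fun β => E jb α β) :=
      fun jb α => ⟨C, by rintro _ ⟨β, rfl⟩; exact (abs_le.1 (hEbd jb α β)).2⟩
    have hCbl : ∀ jb, BddBelow (Set.range fun α => ⨆ β, E jb α β) := by
      intro jb
      refine ⟨-C, ?_⟩
      rintro _ ⟨α, rfl⟩
      exact le_trans (neg_le_of_abs_le (hEbd jb α (Classical.arbitrary ℬ)))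
        (le_ciSup (hCb jb α) _)
    have hsol' : ∀ jb, (⨅ α : 𝒜, ⨆ β : ℬ, E jb α β) = 0 := fun jb => hsol n hn1 hmle jb
    -- supremum and infimum of U n
    have hSub : BddAbove (Set.range fun jb => U n jb) :=
      ⟨R, by rintro _ ⟨jb, rfl⟩; exact (abs_le.1 (hR n jb)).2⟩
    have hSlb : BddBelow (Set.range fun jb => U n jb) :=
      ⟨-R, by rintro _ ⟨jb, rfl⟩; exact neg_le_of_abs_le (hR n jb)⟩
    set S : ℝ := ⨆ jb, U n jb with hS
    set S' : ℝ := ⨅ jb, U n jb with hS'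
    have hUleS : ∀ x, U n x ≤ S := fun x => le_ciSup hSub x
    have hS'leU : ∀ x, S' ≤ U n x := fun x => ciInf_le hSlb x
    -- upper bound on S
    have hSup : S ≤ B + Δt * F := by
      refine le_of_forall_pos_le_add (fun ε hε => ?_)
      set δ : ℝ := ε / (A + 2) with hδdef
      have hδ : 0 < δ := div_pos hε (by linarith)
      have hδε : (A + 2) * δ ≤ ε := by
        rw [hδdef, mul_comm, div_mul_cancel₀ _ (by linarith : A + 2 ≠ 0)]
      obtain ⟨jb, hjb⟩ := exists_lt_of_lt_ciSup (f := fun jb => U n jb)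
        (show S - δ < S by linarith)
      have h0 : (⨅ α : 𝒜, ⨆ β : ℬ, E jb α β) < δ := by rw [hsol' jb]; exact hδ
      obtain ⟨α, hα⟩ := exists_lt_of_ciInf_lt h0
      have hβ : E jb α (Classical.arbitrary ℬ) < δ :=
        lt_of_le_of_lt (le_ciSup (hCb jb α) _) hα
      set β := Classical.arbitrary ℬ
      have hT := hT0 jb α β
      have hTA := hannA jb α β
      have hP := hPle jb α β S hUleS
      have hQ := hQle jb α β
      have hf := (abs_le.1 (hF n jb α β)).2
      have hfm : Δt * f n jb α β ≤ Δt * F := mul_le_mul_of_nonneg_left hf hΔt.le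
      simp only [hE] at hβ
      -- from hβ : (1+T) U - P - Q - Δt f < δ
      -- U n jb ≥ S - δ, so T * U n jb ≥ T * (S - δ)
      have hTU : (∑' j : {j : Fin N → ℤ // j ≠ 0}, ann n jb j.1 α β) * (S - δ) ≤
          (∑' j : {j : Fin N → ℤ // j ≠ 0}, ann n jb j.1 α β) * U n jb :=
        mul_le_mul_of_nonneg_left hjb.le hT
      nlinarith
    -- lower bound on S'
    have hSlo : -(B + Δt * F) ≤ S' := by
      rw [neg_le]
      refine le_of_forall_pos_le_add (fun ε hε => ?_)
      set δ : ℝ := ε / (A + 2) with hδdef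
      have hδ : 0 < δ := div_pos hε (by linarith)
      have hδε : (A + 2) * δ ≤ ε := by
        rw [hδdef, mul_comm, div_mul_cancel₀ _ (by linarith : A + 2 ≠ 0)]
      obtain ⟨jb, hjb⟩ := exists_lt_of_ciInf_lt (f := fun jb => U n jb)
        (show S' < S' + δ by linarith)
      set α := Classical.arbitrary 𝒜
      have h0 : (0 : ℝ) ≤ ⨆ β : ℬ, E jb α β := by
        rw [← hsol' jb]; exact ciInf_le (hCbl jb) α
      obtain ⟨β, hβ⟩ := exists_lt_of_lt_ciSup (show -δ < ⨆ β : ℬ, E jb α β by linarith)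
      have hT := hT0 jb α β
      have hTA := hannA jb α β
      have hP := hPge jb α β S' hS'leU
      have hQ := hQge jb α β
      have hf := (abs_le.1 (hF n jb α β)).1
      have hfm : Δt * (-F) ≤ Δt * f n jb α β := mul_le_mul_of_nonneg_left hf hΔt.le
      simp only [hE] at hβ
      have hTU : (∑' j : {j : Fin N → ℤ // j ≠ 0}, ann n jb j.1 α β) * U n jb ≤
          (∑' j : {j : Fin N → ℤ // j ≠ 0}, ann n jb j.1 α β) * (S' + δ) :=
        mul_le_mul_of_nonneg_left hjb.le hT
      nlinarith
    intro jb
    have h1 := hUleS jb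
    have h2 := hS'leU jb
    rw [abs_le]
    push_cast
    rw [show (n : ℝ) = (m : ℝ) + 1 by simp [hn]]
    constructor <;> [linarith; linarith]
end

section
/- Let N ∈ ℕ, R, L, γ, ε > 0, let G ⊆ ℝ^N be nonempty, let U : G → ℝ satisfy |U(x)| ≤ R for all x ∈ G, and let u : ℝ^N → ℝ satisfy |u(y)| ≤ R for all y and |u(y) − u(y′)| ≤ L|y−y′| for all y, y′. Define Ψ(x,y) = U(x) − u(y) − (γ/2)|x−y|² − (ε/2)(|x|² + |y|²) for (x,y) ∈ G × ℝ^N. Suppose (x₀,y₀) ∈ G × ℝ^N is a global maximum point of Ψ over G × ℝ^N and Ψ(x₀,y₀) ≥ 0. Then: (i) (γ/2)|x₀−y₀|² + (ε/2)(|x₀|² + |y₀|²) ≤ U(x₀) − u(y₀) ≤ 2R, and in particular ε(|x₀|² + |y₀|²) ≤ 4R; (ii) γ|x₀−y₀| ≤ L + √(4Rε). -/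
open MeasureTheory

open RealInnerProductSpace in
set_option maxHeartbeats 1000000 in
/-- maximum-point estimates in the doubling-of-variables
argument with quadratic penalization and localization terms. -/
theorem doubling_maximum_point_estimates
    (N : ℕ) (R L γ ε : ℝ) (hR : 0 < R) (hL : 0 < L) (hγ : 0 < γ) (hε : 0 < ε)
    (G : Set (EuclideanSpace ℝ (Fin N))) (hG : G.Nonempty)
    (U u : EuclideanSpace ℝ (Fin N) → ℝ)
    (hUb : ∀ x ∈ G, |U x| ≤ R) (hub : ∀ y, |u y| ≤ R)
    (hulip : ∀ y y', |u y - u y'| ≤ L * ‖y - y'‖)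
    (Ψ : EuclideanSpace ℝ (Fin N) → EuclideanSpace ℝ (Fin N) → ℝ)
    (hΨ : ∀ x y, Ψ x y =
      U x - u y - γ / 2 * ‖x - y‖ ^ 2 - ε / 2 * (‖x‖ ^ 2 + ‖y‖ ^ 2))
    (x₀ y₀ : EuclideanSpace ℝ (Fin N)) (hx₀ : x₀ ∈ G)
    (hmax : ∀ x ∈ G, ∀ y, Ψ x y ≤ Ψ x₀ y₀)
    (hpos : 0 ≤ Ψ x₀ y₀) :
    γ / 2 * ‖x₀ - y₀‖ ^ 2 + ε / 2 * (‖x₀‖ ^ 2 + ‖y₀‖ ^ 2) ≤ U x₀ - u y₀ ∧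
    U x₀ - u y₀ ≤ 2 * R ∧
    ε * (‖x₀‖ ^ 2 + ‖y₀‖ ^ 2) ≤ 4 * R ∧
    γ * ‖x₀ - y₀‖ ≤ L + Real.sqrt (4 * R * ε) := by
  have hΨ0 := hΨ x₀ y₀
  have h1 : γ / 2 * ‖x₀ - y₀‖ ^ 2 + ε / 2 * (‖x₀‖ ^ 2 + ‖y₀‖ ^ 2) ≤ U x₀ - u y₀ := by
    nlinarith [hpos, hΨ0]
  have h2 : U x₀ - u y₀ ≤ 2 * R := by
    have := abs_le.1 (hUb x₀ hx₀)
    have := abs_le.1 (hub y₀)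
    linarith [this.1, this.2]
  have h3 : ε * (‖x₀‖ ^ 2 + ‖y₀‖ ^ 2) ≤ 4 * R := by
    nlinarith [sq_nonneg ‖x₀ - y₀‖, h1, h2]
  refine ⟨h1, h2, h3, ?_⟩
  -- gradient estimate: ‖γ • (x₀ - y₀) - ε • y₀‖ ≤ L
  set d := x₀ - y₀ with hd
  set w : EuclideanSpace ℝ (Fin N) := γ • d - ε • y₀ with hw
  have key : ∀ t : ℝ, 0 < t →
      t * ‖w‖ ^ 2 ≤ L * (t * ‖w‖) + t ^ 2 * ((γ + ε) / 2) * ‖w‖ ^ 2 := by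
    intro t ht
    have hm := hmax x₀ hx₀ (y₀ + t • w)
    rw [hΨ x₀ (y₀ + t • w), hΨ0] at hm
    have hx : x₀ - (y₀ + t • w) = d - t • w := by rw [hd]; abel
    rw [hx] at hm
    have e1 : ‖d - t • w‖ ^ 2 = ‖d‖ ^ 2 - 2 * (t * ⟪d, w⟫) + t ^ 2 * ‖w‖ ^ 2 := by
      rw [norm_sub_sq_real, real_inner_smul_right, norm_smul]
      ring_nf
      rw [Real.norm_eq_abs, sq_abs]
    have e2 : ‖y₀ + t • w‖ ^ 2 = ‖y₀‖ ^ 2 + 2 * (t * ⟪y₀, w⟫) + t ^ 2 * ‖w‖ ^ 2 := by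
      rw [norm_add_sq_real, real_inner_smul_right, norm_smul]
      ring_nf
      rw [Real.norm_eq_abs, sq_abs]
    have elip : u (y₀ + t • w) - u y₀ ≤ L * (t * ‖w‖) := by
      have h := (abs_le.1 (hulip (y₀ + t • w) y₀)).2
      have hn : ‖y₀ + t • w - y₀‖ = t * ‖w‖ := by
        have he : y₀ + t • w - y₀ = t • w := by abel
        rw [he, norm_smul, Real.norm_eq_abs, abs_of_pos ht]
      rw [hn] at h
      linarith
    have einner : γ * ⟪d, w⟫ - ε * ⟪y₀, w⟫ = ‖w‖ ^ 2 := by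
      have : ⟪w, w⟫ = ‖w‖ ^ 2 := real_inner_self_eq_norm_sq w
      rw [hw] at this ⊢
      rw [inner_sub_left, real_inner_smul_left, real_inner_smul_left] at this
      linarith [this]
    rw [e1, e2] at hm
    have einner' : γ * (t * ⟪d, w⟫) - ε * (t * ⟪y₀, w⟫) = t * ‖w‖ ^ 2 := by
      have := congrArg (t * ·) einner
      linear_combination this
    nlinarith [hm, elip, einner']
  have hwle : ‖w‖ ≤ L := by
    rcases eq_or_lt_of_le (norm_nonneg w) with h0 | h0
    · rw [← h0]; linarith
    · -- ‖w‖ ≤ L + t(γ+ε)/2‖w‖ for all t > 0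
      refine le_of_forall_pos_le_add ?_
      intro δ hδ
      have hc : 0 < (γ + ε) / 2 * ‖w‖ := by positivity
      set t := δ / ((γ + ε) / 2 * ‖w‖) with htdef
      have ht : 0 < t := by positivity
      have := key t ht
      have hdiv : ‖w‖ ≤ L + t * ((γ + ε) / 2) * ‖w‖ := by
        have h' : t * ‖w‖ * ‖w‖ ≤ t * ‖w‖ * (L + t * ((γ + ε) / 2) * ‖w‖) := by
          nlinarith [this]
        have htw : 0 < t * ‖w‖ := by positivity
        exact le_of_mul_le_mul_left (by linarith [h']) htw
      have ht' : t * ((γ + ε) / 2) * ‖w‖ = δ := by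
        rw [htdef, mul_assoc, div_mul_cancel₀ δ hc.ne']
      linarith [hdiv, ht'.le, ht'.ge]
  have hy0 : ε * ‖y₀‖ ≤ Real.sqrt (4 * R * ε) := by
    have h4 : (ε * ‖y₀‖) ^ 2 ≤ 4 * R * ε := by
      nlinarith [mul_le_mul_of_nonneg_left h3 hε.le,
        mul_nonneg (mul_nonneg hε.le hε.le) (sq_nonneg ‖x₀‖)]
    calc ε * ‖y₀‖ = Real.sqrt ((ε * ‖y₀‖) ^ 2) := by
          rw [Real.sqrt_sq (by positivity)]
      _ ≤ Real.sqrt (4 * R * ε) := Real.sqrt_le_sqrt h4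
  have htri : γ * ‖d‖ ≤ ‖w‖ + ε * ‖y₀‖ := by
    have : γ • d = w + ε • y₀ := by rw [hw]; abel
    calc γ * ‖d‖ = ‖γ • d‖ := by
          rw [norm_smul, Real.norm_eq_abs, abs_of_pos hγ]
      _ = ‖w + ε • y₀‖ := by rw [this]
      _ ≤ ‖w‖ + ‖ε • y₀‖ := norm_add_le _ _
      _ = ‖w‖ + ε * ‖y₀‖ := by
          rw [norm_smul, Real.norm_eq_abs, abs_of_pos hε]
  linarith [htri, hwle, hy0]
end

section
/- Let η : ℝ^M → ℝ^N be Borel measurable with |η(z)| ≤ K|z| for |z| < 1, and let ν be a nonnegative Borel measure on ℝ^M ∖ {0} which on {0 < |z| < 1} has density k with 0 ≤ k(z) ≤ C/|z|^{M+σ}, σ ∈ (0,2). For δ ∈ (0,1) define the matrix a_δ = (1/2) ∫_{0<|z|≤δ} η(z) η(z)^T ν(dz). Then there is a constant C′ > 0 depending only on M, N, σ, C and K such that for every three times continuously differentiable φ : ℝ^N → ℝ with bounded second and third derivatives and every x ∈ ℝ^N, | ∫_{0<|z|≤δ} ( φ(x+η(z)) − φ(x) − ⟨η(z), ∇φ(x)⟩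 ) ν(dz) − tr( a_δ D²φ(x) ) | ≤ C′ ‖D³φ‖_∞ δ^{3−σ}. -/
open MeasureTheory

open Metric Set
open scoped ENNReal
set_option maxHeartbeats 1000000
set_option linter.unusedVariables false
set_option synthInstance.maxHeartbeats 400000


section Taylor
variable {E : Type*} [NormedAddCommGroup E] [NormedSpace ℝ E]

private lemma norm_fd2_le (φ : E → ℝ) {B : ℝ}
    (hB : ∀ u, ‖iteratedFDeriv ℝ 2 φ u‖ ≤ B) (u : E) :
    ‖fderiv ℝ (fderiv ℝ φ) u‖ ≤ B := by
  have : ‖fderiv ℝ (fderiv ℝ φ) u‖ = ‖iteratedFDeriv ℝ 2 φ u‖ := by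
    rw [← norm_iteratedFDeriv_zero (𝕜 := ℝ) (f := fderiv ℝ (fderiv ℝ φ)) (x := u),
      norm_iteratedFDeriv_fderiv, norm_iteratedFDeriv_fderiv]
  rw [this]; exact hB u

private lemma norm_fd3_le (φ : E → ℝ) {B : ℝ}
    (hB : ∀ u, ‖iteratedFDeriv ℝ 3 φ u‖ ≤ B) (u : E) :
    ‖iteratedFDeriv ℝ 1 (fderiv ℝ (fderiv ℝ φ)) u‖ ≤ B := by
  rw [norm_iteratedFDeriv_fderiv, norm_iteratedFDeriv_fderiv]; exact hB u

end Taylor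

section Taylor2
variable {E : Type*} [NormedAddCommGroup E] [NormedSpace ℝ E]

private lemma mvt_grad (φ : E → ℝ) (hφ : ContDiff ℝ 3 φ) {B : ℝ}
    (hB : ∀ u, ‖iteratedFDeriv ℝ 2 φ u‖ ≤ B) (u v : E) :
    ‖fderiv ℝ φ u - fderiv ℝ φ v‖ ≤ B * ‖u - v‖ := by
  have hc1 : ContDiff ℝ 2 (fderiv ℝ φ) := hφ.fderiv_right (by norm_num)
  have hd2 : Differentiable ℝ (fderiv ℝ φ) := hc1.differentiable (by norm_num)
  exact convex_univ.norm_image_sub_le_of_norm_fderiv_le (fun w _ => hd2 w)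
    (fun w _ => norm_fd2_le φ hB w) (mem_univ v) (mem_univ u)

private lemma mvt_hess (φ : E → ℝ) (hφ : ContDiff ℝ 3 φ) {B : ℝ}
    (hB : ∀ u, ‖iteratedFDeriv ℝ 3 φ u‖ ≤ B) (u v : E) :
    ‖fderiv ℝ (fderiv ℝ φ) u - fderiv ℝ (fderiv ℝ φ) v‖ ≤ B * ‖u - v‖ := by
  have hc1 : ContDiff ℝ 2 (fderiv ℝ φ) := hφ.fderiv_right (by norm_num)
  have hc2 : ContDiff ℝ 1 (fderiv ℝ (fderiv ℝ φ)) := hc1.fderiv_right (by norm_num)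
  have hd3 : Differentiable ℝ (fderiv ℝ (fderiv ℝ φ)) := hc2.differentiable (by norm_num)
  exact convex_univ.norm_image_sub_le_of_norm_fderiv_le (𝕜 := ℝ) (f := fderiv ℝ (fderiv ℝ φ)) (fun w _ => hd3 w)
    (fun w _ => by rw [← norm_iteratedFDeriv_one (𝕜 := ℝ) (fderiv ℝ (fderiv ℝ φ)) (x := w)]; exact norm_fd3_le φ hB w) (mem_univ v) (mem_univ u)

private lemma hasFDerivAt_shift (φ : E → ℝ) (hφ : ContDiff ℝ 3 φ) (x w : E) :
    HasFDerivAt (fun w : E => fderiv ℝ φ (x + w)) (fderiv ℝ (fderiv ℝ φ) (x + w)) w := by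
  have hc1 : ContDiff ℝ 2 (fderiv ℝ φ) := hφ.fderiv_right (by norm_num)
  have hd2 : Differentiable ℝ (fderiv ℝ φ) := hc1.differentiable (by norm_num)
  have := ((hd2 (x + w)).hasFDerivAt).comp w ((hasFDerivAt_id w).const_add x)
  simpa [Function.comp_def] using this

private lemma mvt_step2 (φ : E → ℝ) (hφ : ContDiff ℝ 3 φ) {B : ℝ}
    (hB : ∀ u, ‖iteratedFDeriv ℝ 3 φ u‖ ≤ B) (x y : E) :
    ‖fderiv ℝ φ (x + y) - fderiv ℝ φ x - fderiv ℝ (fderiv ℝ φ) x y‖ ≤ (B * ‖y‖) * ‖y‖ := by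
  have hB0 : 0 ≤ B := le_trans (norm_nonneg _) (hB x)
  set f1 := fderiv ℝ φ
  set f2 := fderiv ℝ f1 with hf2
  have key : ∀ w ∈ closedBall (0:E) ‖y‖,
      HasFDerivWithinAt (fun w => f1 (x + w) - f1 x - f2 x w) (f2 (x + w) - f2 x)
        (closedBall (0:E) ‖y‖) w := by
    intro w _
    exact (((hasFDerivAt_shift φ hφ x w).sub_const (f1 x)).sub
      ((f2 x).hasFDerivAt (x := w))).hasFDerivWithinAt
  have bound : ∀ w ∈ closedBall (0:E) ‖y‖, ‖f2 (x + w) - f2 x‖ ≤ B * ‖y‖ := by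
    intro w hw
    calc ‖f2 (x + w) - f2 x‖ ≤ B * ‖x + w - x‖ := mvt_hess φ hφ hB (x + w) x
    _ = B * ‖w‖ := by rw [add_sub_cancel_left]
    _ ≤ B * ‖y‖ := by
        apply mul_le_mul_of_nonneg_left _ hB0
        simpa using mem_closedBall_iff_norm.mp hw
  have hy : y ∈ closedBall (0:E) ‖y‖ := by simp [mem_closedBall_iff_norm]
  have := (convex_closedBall _ _).norm_image_sub_le_of_norm_hasFDerivWithin_le key bound
    (mem_closedBall_self (norm_nonneg y)) hy
  simpa using this

end Taylor2

section Taylor3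
variable {E : Type*} [NormedAddCommGroup E] [NormedSpace ℝ E]

private lemma hasFDerivAt_shift0 (φ : E → ℝ) (hφ : ContDiff ℝ 3 φ) (x w : E) :
    HasFDerivAt (fun w : E => φ (x + w)) (fderiv ℝ φ (x + w)) w := by
  have hd1 : Differentiable ℝ φ := hφ.differentiable (by norm_num)
  have := ((hd1 (x + w)).hasFDerivAt).comp w ((hasFDerivAt_id w).const_add x)
  simpa [Function.comp_def] using this

private lemma taylor_two_bound (φ : E → ℝ) (hφ : ContDiff ℝ 3 φ) {B : ℝ}
    (hB : ∀ u, ‖iteratedFDeriv ℝ 2 φ u‖ ≤ B) (x h : E) :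
    |φ (x + h) - φ x - fderiv ℝ φ x h| ≤ B * ‖h‖ ^ 2 := by
  have hB0 : 0 ≤ B := le_trans (norm_nonneg _) (hB x)
  set f1 := fderiv ℝ φ
  have key : ∀ w ∈ closedBall (0:E) ‖h‖,
      HasFDerivWithinAt (fun w => φ (x + w) - φ x - f1 x w) (f1 (x + w) - f1 x)
        (closedBall (0:E) ‖h‖) w := fun w _ =>
    (((hasFDerivAt_shift0 φ hφ x w).sub_const (φ x)).sub
      ((f1 x).hasFDerivAt (x := w))).hasFDerivWithinAt
  have bound : ∀ w ∈ closedBall (0:E) ‖h‖, ‖f1 (x + w) - f1 x‖ ≤ B * ‖h‖ := by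
    intro w hw
    calc ‖f1 (x + w) - f1 x‖ ≤ B * ‖x + w - x‖ := mvt_grad φ hφ hB (x + w) x
    _ = B * ‖w‖ := by rw [add_sub_cancel_left]
    _ ≤ B * ‖h‖ := by
        apply mul_le_mul_of_nonneg_left _ hB0
        simpa using mem_closedBall_iff_norm.mp hw
  have hh : h ∈ closedBall (0:E) ‖h‖ := by simp [mem_closedBall_iff_norm]
  have := (convex_closedBall _ _).norm_image_sub_le_of_norm_hasFDerivWithin_le key bound
    (mem_closedBall_self (norm_nonneg h)) hh
  rw [← Real.norm_eq_abs]
  calc ‖φ (x + h) - φ x - f1 x h‖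
      = ‖(φ (x + h) - φ x - f1 x h) - (φ (x + 0) - φ x - f1 x 0)‖ := by simp
    _ ≤ (B * ‖h‖) * ‖h - 0‖ := this
    _ = B * ‖h‖ ^ 2 := by rw [sub_zero]; ring

private lemma taylor_three_bound (φ : E → ℝ) (hφ : ContDiff ℝ 3 φ) {B : ℝ}
    (hB : ∀ u, ‖iteratedFDeriv ℝ 3 φ u‖ ≤ B) (x h : E) :
    |φ (x + h) - φ x - fderiv ℝ φ x h - (1/2) * fderiv ℝ (fderiv ℝ φ) x h h|
      ≤ B * ‖h‖ ^ 3 := by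
  have hB0 : 0 ≤ B := le_trans (norm_nonneg _) (hB x)
  set f1 := fderiv ℝ φ with hf1
  set f2 := fderiv ℝ f1 with hf2
  have hd1 : Differentiable ℝ φ := hφ.differentiable (by norm_num)
  have hc1 : ContDiff ℝ 2 f1 := hφ.fderiv_right (by norm_num)
  have hd2 : Differentiable ℝ f1 := hc1.differentiable (by norm_num)
  have hsymm : ∀ v w : E, f2 x v w = f2 x w v :=
    second_derivative_symmetric (fun y => (hd1 y).hasFDerivAt) ((hd2 x).hasFDerivAt)
  have key : ∀ w ∈ closedBall (0:E) ‖h‖,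
      HasFDerivWithinAt (fun w => φ (x + w) - φ x - f1 x w - (1/2) * f2 x w w)
        (f1 (x + w) - f1 x - f2 x w) (closedBall (0:E) ‖h‖) w := by
    intro w _
    have hquad : HasFDerivAt (fun y : E => (1/2 : ℝ) * f2 x y y)
        ((1/2 : ℝ) • ((f2 x w).comp (ContinuousLinearMap.id ℝ E) + (f2 x).flip w)) w :=
      (((f2 x).hasFDerivAt (x := w)).clm_apply (hasFDerivAt_id w)).const_mul (1/2)
    have hD := (((hasFDerivAt_shift0 φ hφ x w).sub_const (φ x)).sub
      ((f1 x).hasFDerivAt (x := w))).sub hquad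
    have heq : f1 (x + w) - f1 x -
        (1/2 : ℝ) • ((f2 x w).comp (ContinuousLinearMap.id ℝ E) + (f2 x).flip w)
        = f1 (x + w) - f1 x - f2 x w := by
      ext v
      simp only [ContinuousLinearMap.sub_apply, ContinuousLinearMap.smul_apply,
        ContinuousLinearMap.add_apply, ContinuousLinearMap.comp_apply,
        ContinuousLinearMap.coe_id', id_eq, ContinuousLinearMap.flip_apply, smul_eq_mul]
      rw [hsymm v w]
      ring
    rw [heq] at hD
    exact hD.hasFDerivWithinAt
  have bound : ∀ w ∈ closedBall (0:E) ‖h‖,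
      ‖f1 (x + w) - f1 x - f2 x w‖ ≤ B * ‖h‖ * ‖h‖ := by
    intro w hw
    have hwh : ‖w‖ ≤ ‖h‖ := by simpa using mem_closedBall_iff_norm.mp hw
    calc ‖f1 (x + w) - f1 x - f2 x w‖ ≤ (B * ‖w‖) * ‖w‖ := mvt_step2 φ hφ hB x w
    _ ≤ (B * ‖h‖) * ‖h‖ := by
        apply mul_le_mul (mul_le_mul_of_nonneg_left hwh hB0) hwh (norm_nonneg w)
        positivity
  have hh : h ∈ closedBall (0:E) ‖h‖ := by simp [mem_closedBall_iff_norm]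
  have := (convex_closedBall _ _).norm_image_sub_le_of_norm_hasFDerivWithin_le key bound
    (mem_closedBall_self (norm_nonneg h)) hh
  rw [← Real.norm_eq_abs]
  calc ‖φ (x + h) - φ x - f1 x h - (1/2) * f2 x h h‖
      = ‖(φ (x + h) - φ x - f1 x h - (1/2) * f2 x h h)
          - (φ (x + 0) - φ x - f1 x 0 - (1/2) * f2 x 0 0)‖ := by simp
    _ ≤ (B * ‖h‖ * ‖h‖) * ‖h - 0‖ := this
    _ = B * ‖h‖ ^ 3 := by rw [sub_zero]; ring

end Taylor3


private lemma nu_rpow_bound (M : ℕ) (σ C : ℝ) (hσ0 : 0 < σ) (hC : 0 < C)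
    (ν : Measure (EuclideanSpace ℝ (Fin M)))
    (k : EuclideanSpace ℝ (Fin M) → ℝ)
    (hνk : ∀ s : Set (EuclideanSpace ℝ (Fin M)), MeasurableSet s →
      s ⊆ {z | 0 < ‖z‖ ∧ ‖z‖ < 1} → ν s = ∫⁻ z in s, ENNReal.ofReal (k z) ∂volume)
    (hk : ∀ z : EuclideanSpace ℝ (Fin M), 0 < ‖z‖ → ‖z‖ < 1 →
      0 ≤ k z ∧ k z ≤ C / ‖z‖ ^ ((M : ℝ) + σ))
    (p δ : ℝ) (hp : σ < p) (hδ0 : 0 < δ) (hδ1 : δ < 1) :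
    ∫⁻ z in {z : EuclideanSpace ℝ (Fin M) | 0 < ‖z‖ ∧ ‖z‖ ≤ δ},
        ENNReal.ofReal (‖z‖ ^ p) ∂ν ≤
      ENNReal.ofReal (C * 2 ^ ((M:ℝ) + σ) * 2 ^ (M:ℕ) * δ ^ (p - σ)) *
        ((1 - ENNReal.ofReal ((2:ℝ)⁻¹ ^ (p - σ)))⁻¹ *
          volume (Metric.ball (0 : EuclideanSpace ℝ (Fin M)) 1)) := by
  have hp0 : 0 < p := lt_trans hσ0 hp
  set r : ℕ → ℝ := fun n => δ * (2:ℝ)⁻¹ ^ n with hrdef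
  have hr0 : ∀ n, 0 < r n := fun n => by positivity
  have hrδ : ∀ n, r n ≤ δ := fun n => by
    have : (2:ℝ)⁻¹ ^ n ≤ 1 := pow_le_one₀ (by norm_num) (by norm_num)
    calc r n = δ * (2:ℝ)⁻¹ ^ n := rfl
    _ ≤ δ * 1 := by nlinarith [hδ0]
    _ = δ := mul_one δ
  have hrsucc : ∀ n, r (n + 1) = r n / 2 := fun n => by
    simp only [hrdef, pow_succ]; ring
  set A : ℕ → Set (EuclideanSpace ℝ (Fin M)) :=
    fun n => {z | r (n+1) < ‖z‖ ∧ ‖z‖ ≤ r n} with hAdef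
  have hAmeas : ∀ n, MeasurableSet (A n) := by
    intro n
    have : A n = {z : EuclideanSpace ℝ (Fin M) | r (n+1) < ‖z‖} ∩
        {z | ‖z‖ ≤ r n} := rfl
    rw [this]
    exact (measurableSet_lt measurable_const measurable_norm).inter
      (measurableSet_le measurable_norm measurable_const)
  have hAsub : ∀ n, A n ⊆ {z : EuclideanSpace ℝ (Fin M) | 0 < ‖z‖ ∧ ‖z‖ < 1} := by
    intro n z hz
    exact ⟨lt_trans (hr0 (n+1)) hz.1, lt_of_le_of_lt hz.2 (lt_of_le_of_lt (hrδ n) hδ1)⟩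
  have hsub : {z : EuclideanSpace ℝ (Fin M) | 0 < ‖z‖ ∧ ‖z‖ ≤ δ} ⊆ ⋃ n, A n := by
    intro z hz
    obtain ⟨hz0, hzδ⟩ := hz
    have hex : ∃ m : ℕ, r m < ‖z‖ := by
      obtain ⟨m, hm⟩ := exists_pow_lt_of_lt_one (div_pos hz0 hδ0) (by norm_num : (2:ℝ)⁻¹ < 1)
      refine ⟨m, ?_⟩
      have h1 : δ * (2:ℝ)⁻¹ ^ m < δ * (‖z‖ / δ) := mul_lt_mul_of_pos_left hm hδ0
      have h2 : δ * (‖z‖ / δ) = ‖z‖ := by field_simp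
      rw [hrdef]
      simpa [h2] using h1
    classical
    have h₀ : r (Nat.find hex) < ‖z‖ := Nat.find_spec hex
    have hne : Nat.find hex ≠ 0 := by
      intro h0
      rw [h0] at h₀
      simp only [hrdef, pow_zero, mul_one] at h₀
      exact absurd hzδ (not_le.mpr h₀)
    obtain ⟨n, hn⟩ := Nat.exists_eq_succ_of_ne_zero hne
    refine mem_iUnion.mpr ⟨n, ?_, ?_⟩
    · rw [show n + 1 = Nat.find hex from hn.symm]; exact h₀
    · exact le_of_not_gt (Nat.find_min hex (by omega))
  -- per annulus bound
  set V₁ := volume (Metric.ball (0 : EuclideanSpace ℝ (Fin M)) 1) with hV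
  set C₂ := C * 2 ^ ((M:ℝ) + σ) * (2:ℝ) ^ (M:ℕ) with hC₂
  have hC₂0 : 0 ≤ C₂ := by positivity
  have annulus : ∀ n, ∫⁻ z in A n, ENNReal.ofReal (‖z‖ ^ p) ∂ν ≤
      ENNReal.ofReal (C₂ * r n ^ (p - σ)) * V₁ := by
    intro n
    have step1 : ∫⁻ z in A n, ENNReal.ofReal (‖z‖ ^ p) ∂ν ≤
        ENNReal.ofReal (r n ^ p) * ν (A n) := by
      rw [← setLIntegral_const (A n) (ENNReal.ofReal (r n ^ p))]
      refine setLIntegral_mono measurable_const (fun z hz => ?_)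
      exact ENNReal.ofReal_le_ofReal
        (Real.rpow_le_rpow (norm_nonneg z) hz.2 hp0.le)
    have step2 : ν (A n) ≤ ENNReal.ofReal (C / r (n+1) ^ ((M:ℝ) + σ)) * volume (A n) := by
      rw [hνk (A n) (hAmeas n) (hAsub n)]
      rw [← setLIntegral_const (A n) (ENNReal.ofReal (C / r (n+1) ^ ((M:ℝ) + σ)))]
      refine setLIntegral_mono measurable_const (fun z hz => ?_)
      have hz01 := hAsub n hz
      refine ENNReal.ofReal_le_ofReal (le_trans (hk z hz01.1 hz01.2).2 ?_)
      apply div_le_div_of_nonneg_left hC.le (Real.rpow_pos_of_pos (hr0 (n+1)) _)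
      exact Real.rpow_le_rpow (hr0 (n+1)).le hz.1.le (by positivity)
    have step3 : volume (A n) ≤ ENNReal.ofReal ((2 * r n) ^ (M : ℕ)) * V₁ := by
      have hball : A n ⊆ Metric.ball (0 : EuclideanSpace ℝ (Fin M)) (2 * r n) := by
        intro z hz
        rw [mem_ball_zero_iff]
        calc ‖z‖ ≤ r n := hz.2
        _ < 2 * r n := by nlinarith [hr0 n]
      calc volume (A n) ≤ volume (Metric.ball (0 : EuclideanSpace ℝ (Fin M)) (2 * r n)) :=
            measure_mono hball
      _ = ENNReal.ofReal ((2 * r n) ^ Module.finrank ℝ (EuclideanSpace ℝ (Fin M))) * V₁ :=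
            Measure.addHaar_ball_of_pos _ _ (by positivity)
      _ = ENNReal.ofReal ((2 * r n) ^ (M : ℕ)) * V₁ := by
            rw [finrank_euclideanSpace_fin]
    have harith : ∀ t : ℝ, 0 < t →
        t ^ p * (C / (t / 2) ^ ((M:ℝ) + σ) * (2 * t) ^ (M : ℕ)) = C₂ * t ^ (p - σ) := by
      intro t ht
      rw [Real.div_rpow ht.le (by norm_num : (0:ℝ) ≤ 2), mul_pow, hC₂]
      have h2pos : (0:ℝ) < 2 ^ ((M:ℝ) + σ) := Real.rpow_pos_of_pos (by norm_num) _
      have hrapos : (0:ℝ) < t ^ ((M:ℝ) + σ) := Real.rpow_pos_of_pos ht _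
      have e3 : t ^ p * t ^ (M : ℕ) = t ^ (p - σ) * t ^ ((M:ℝ) + σ) := by
        rw [← Real.rpow_natCast t M, ← Real.rpow_add ht, ← Real.rpow_add ht]
        ring_nf
      field_simp
      linear_combination e3
    calc ∫⁻ z in A n, ENNReal.ofReal (‖z‖ ^ p) ∂ν
        ≤ ENNReal.ofReal (r n ^ p) * ν (A n) := step1
      _ ≤ ENNReal.ofReal (r n ^ p) * (ENNReal.ofReal (C / r (n+1) ^ ((M:ℝ) + σ)) *
            (ENNReal.ofReal ((2 * r n) ^ (M : ℕ)) * V₁)) := by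
          gcongr
          exact le_trans step2 (by gcongr)
      _ = ENNReal.ofReal (r n ^ p * (C / r (n+1) ^ ((M:ℝ) + σ) * (2 * r n) ^ (M : ℕ))) * V₁ := by
          rw [ENNReal.ofReal_mul (by positivity), ENNReal.ofReal_mul (by positivity)]
          ring
      _ = ENNReal.ofReal (C₂ * r n ^ (p - σ)) * V₁ := by
          rw [hrsucc n, harith (r n) (hr0 n)]
  -- sum up
  have hq : (0:ℝ) ≤ (2:ℝ)⁻¹ ^ (p - σ) := by positivity
  have hsplit : ∀ n : ℕ, ENNReal.ofReal (C₂ * r n ^ (p - σ)) =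
      ENNReal.ofReal (C₂ * δ ^ (p - σ)) * ENNReal.ofReal ((2:ℝ)⁻¹ ^ (p - σ)) ^ n := by
    intro n
    have e1 : r n ^ (p - σ) = δ ^ (p - σ) * ((2:ℝ)⁻¹ ^ (p - σ)) ^ n := by
      rw [hrdef]
      simp only
      rw [Real.mul_rpow hδ0.le (by positivity), ← Real.rpow_natCast ((2:ℝ)⁻¹) n,
        ← Real.rpow_natCast ((2:ℝ)⁻¹ ^ (p - σ)) n, ← Real.rpow_mul (by norm_num),
        ← Real.rpow_mul (by norm_num), mul_comm (n:ℝ) (p - σ)]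
    rw [e1, ← mul_assoc, ENNReal.ofReal_mul (by positivity), ENNReal.ofReal_pow hq]
  calc ∫⁻ z in {z : EuclideanSpace ℝ (Fin M) | 0 < ‖z‖ ∧ ‖z‖ ≤ δ},
          ENNReal.ofReal (‖z‖ ^ p) ∂ν
      ≤ ∫⁻ z in ⋃ n, A n, ENNReal.ofReal (‖z‖ ^ p) ∂ν := lintegral_mono_set hsub
    _ ≤ ∑' n, ∫⁻ z in A n, ENNReal.ofReal (‖z‖ ^ p) ∂ν := lintegral_iUnion_le _ _
    _ ≤ ∑' n, ENNReal.ofReal (C₂ * r n ^ (p - σ)) * V₁ := ENNReal.tsum_le_tsum annulus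
    _ = (∑' n, ENNReal.ofReal (C₂ * δ ^ (p - σ)) * ENNReal.ofReal ((2:ℝ)⁻¹ ^ (p - σ)) ^ n) * V₁ := by
        rw [ENNReal.tsum_mul_right]
        congr 1
        exact tsum_congr hsplit
    _ = ENNReal.ofReal (C₂ * δ ^ (p - σ)) *
          ((1 - ENNReal.ofReal ((2:ℝ)⁻¹ ^ (p - σ)))⁻¹ * V₁) := by
        rw [ENNReal.tsum_mul_left, ENNReal.tsum_geometric, mul_assoc]


private lemma coord_le {N : ℕ} (h : EuclideanSpace ℝ (Fin N)) (i : Fin N) :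
    |h i| ≤ ‖h‖ := by
  rw [EuclideanSpace.norm_eq h]
  rw [show |h i| = Real.sqrt ((h i) ^ 2) from (Real.sqrt_sq_eq_abs _).symm]
  apply Real.sqrt_le_sqrt
  have := Finset.single_le_sum (f := fun j => ‖h j‖ ^ 2)
    (fun j _ => sq_nonneg ‖h j‖) (Finset.mem_univ i)
  simpa [Real.norm_eq_abs] using this

private lemma euclid_repr {N : ℕ} (h : EuclideanSpace ℝ (Fin N)) :
    h = ∑ i, h i • EuclideanSpace.single i (1:ℝ) := by
  have := (EuclideanSpace.basisFun (Fin N) ℝ).sum_repr h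
  simp only [EuclideanSpace.basisFun_apply, EuclideanSpace.basisFun_repr] at this
  exact this.symm

private lemma bilin_expand {N : ℕ}
    (A : EuclideanSpace ℝ (Fin N) →L[ℝ] EuclideanSpace ℝ (Fin N) →L[ℝ] ℝ)
    (h : EuclideanSpace ℝ (Fin N)) :
    A h h = ∑ i, ∑ j, h i * h j *
      A (EuclideanSpace.single i (1:ℝ)) (EuclideanSpace.single j (1:ℝ)) := by
  conv_lhs => rw [euclid_repr h]
  simp only [map_sum, _root_.map_smul, ContinuousLinearMap.sum_apply,
    ContinuousLinearMap.smul_apply, smul_eq_mul, Finset.mul_sum]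
  rw [Finset.sum_comm]
  refine Finset.sum_congr rfl (fun i _ => Finset.sum_congr rfl (fun j _ => ?_))
  ring

private lemma hess_entry {N : ℕ} (φ : EuclideanSpace ℝ (Fin N) → ℝ)
    (hφ : ContDiff ℝ 3 φ) (x v : EuclideanSpace ℝ (Fin N)) :
    fderiv ℝ (fun y => fderiv ℝ φ y v) x = (fderiv ℝ (fderiv ℝ φ) x).flip v := by
  have hc1 : ContDiff ℝ 2 (fderiv ℝ φ) := hφ.fderiv_right (by norm_num)
  have hd2 : Differentiable ℝ (fderiv ℝ φ) := hc1.differentiable (by norm_num)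
  have h := fderiv_clm_apply (hd2 x) (differentiableAt_const v)
  simpa using h

/-- The covariance matrix `a_δ = (1/2) ∫_{0<|z|≤δ} η(z) η(z)^T ν(dz)`
of the small jumps. -/
noncomputable def smallJumpCov (M N : ℕ)
    (η : EuclideanSpace ℝ (Fin M) → EuclideanSpace ℝ (Fin N))
    (ν : Measure (EuclideanSpace ℝ (Fin M))) (δ : ℝ) : Matrix (Fin N) (Fin N) ℝ :=
  Matrix.of fun i j =>
    1 / 2 * ∫ z in {z : EuclideanSpace ℝ (Fin M) | 0 < ‖z‖ ∧ ‖z‖ ≤ δ},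
      (η z i * η z j) ∂ν

/-- The Hessian matrix `D²φ(x)` of a real-valued function on `ℝ^N`. -/
noncomputable def hessianMatrix (N : ℕ) (φ : EuclideanSpace ℝ (Fin N) → ℝ)
    (x : EuclideanSpace ℝ (Fin N)) : Matrix (Fin N) (Fin N) ℝ :=
  Matrix.of fun i j =>
    fderiv ℝ (fun y => fderiv ℝ φ y (EuclideanSpace.single j (1 : ℝ))) x
      (EuclideanSpace.single i (1 : ℝ))

/-- the small-jump part of the nonlocal operator is approximated
by the local second-order operator `tr(a_δ D²φ)` with error `O(δ^(3-σ))‖D³φ‖_∞`. -/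
theorem small_jump_second_order_approximation
    (M N : ℕ) (σ C K : ℝ) (hσ : σ ∈ Set.Ioo (0 : ℝ) 2) (hC : 0 < C) (hK : 0 < K)
    (η : EuclideanSpace ℝ (Fin M) → EuclideanSpace ℝ (Fin N)) (hη : Measurable η)
    (hηK : ∀ z : EuclideanSpace ℝ (Fin M), ‖z‖ < 1 → ‖η z‖ ≤ K * ‖z‖)
    (ν : Measure (EuclideanSpace ℝ (Fin M))) (hν0 : ν {0} = 0)
    (k : EuclideanSpace ℝ (Fin M) → ℝ)
    (hνk : ∀ s : Set (EuclideanSpace ℝ (Fin M)), MeasurableSet s →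
      s ⊆ {z | 0 < ‖z‖ ∧ ‖z‖ < 1} → ν s = ∫⁻ z in s, ENNReal.ofReal (k z) ∂volume)
    (hk : ∀ z : EuclideanSpace ℝ (Fin M), 0 < ‖z‖ → ‖z‖ < 1 →
      0 ≤ k z ∧ k z ≤ C / ‖z‖ ^ ((M : ℝ) + σ)) :
    ∃ C' > (0 : ℝ), ∀ δ : ℝ, 0 < δ → δ < 1 →
      ∀ φ : EuclideanSpace ℝ (Fin N) → ℝ, ContDiff ℝ 3 φ →
      ∀ B₂ B₃ : ℝ, (∀ x, ‖iteratedFDeriv ℝ 2 φ x‖ ≤ B₂) →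
        (∀ x, ‖iteratedFDeriv ℝ 3 φ x‖ ≤ B₃) →
      ∀ x : EuclideanSpace ℝ (Fin N),
        |(∫ z in {z : EuclideanSpace ℝ (Fin M) | 0 < ‖z‖ ∧ ‖z‖ ≤ δ},
            (φ (x + η z) - φ x - fderiv ℝ φ x (η z)) ∂ν) -
          Matrix.trace (smallJumpCov M N η ν δ * hessianMatrix N φ x)| ≤
        C' * B₃ * δ ^ (3 - σ) := by
  obtain ⟨hσ0, hσ2⟩ := hσ
  classical
  set V₁ := volume (Metric.ball (0 : EuclideanSpace ℝ (Fin M)) 1) with hV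
  have hV₁fin : V₁ ≠ ⊤ := measure_ball_lt_top.ne
  have hgeom : ∀ p : ℝ, σ < p →
      (1 - ENNReal.ofReal ((2:ℝ)⁻¹ ^ (p - σ)))⁻¹ * V₁ ≠ ⊤ := by
    intro p hp
    have hq : ENNReal.ofReal ((2:ℝ)⁻¹ ^ (p - σ)) < 1 := by
      rw [show (1 : ENNReal) = ENNReal.ofReal 1 by simp]
      exact (ENNReal.ofReal_lt_ofReal_iff (by norm_num)).mpr
        (Real.rpow_lt_one (by norm_num) (by norm_num) (by linarith))
    exact ENNReal.mul_ne_top (ENNReal.inv_ne_top.mpr (tsub_pos_of_lt hq).ne') hV₁fin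
  set G3 : ℝ≥0∞ := (1 - ENNReal.ofReal ((2:ℝ)⁻¹ ^ ((3:ℝ) - σ)))⁻¹ * V₁ with hG3
  have hG3fin : G3 ≠ ⊤ := hgeom 3 (by linarith)
  set C₂ : ℝ := C * 2 ^ ((M:ℝ) + σ) * 2 ^ (M:ℕ) with hC₂
  have hC₂0 : 0 < C₂ := by positivity
  refine ⟨K ^ 3 * C₂ * G3.toReal + 1, by positivity, ?_⟩
  intro δ hδ0 hδ1 φ hφ B₂ B₃ hB₂ hB₃ x
  set S := {z : EuclideanSpace ℝ (Fin M) | 0 < ‖z‖ ∧ ‖z‖ ≤ δ} with hSdef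
  have hSmeas : MeasurableSet S :=
    (measurableSet_lt measurable_const measurable_norm).inter
      (measurableSet_le measurable_norm measurable_const)
  set f1 := fderiv ℝ φ with hf1
  set f2 := fderiv ℝ f1 with hf2
  have hB₂0 : 0 ≤ B₂ := le_trans (norm_nonneg _) (hB₂ x)
  have hB₃0 : 0 ≤ B₃ := le_trans (norm_nonneg _) (hB₃ x)
  have hηS : ∀ z ∈ S, ‖η z‖ ≤ K * ‖z‖ := fun z hz =>
    hηK z (lt_of_le_of_lt hz.2 hδ1)
  -- finiteness of second moment
  have h2bound := nu_rpow_bound M σ C hσ0 hC ν k hνk hk 2 δ hσ2 hδ0 hδ1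
  have h2fin : ∫⁻ z in S, ENNReal.ofReal (‖z‖ ^ (2:ℝ)) ∂ν ≠ ⊤ :=
    ne_top_of_le_ne_top (ENNReal.mul_ne_top ENNReal.ofReal_ne_top (hgeom 2 hσ2)) h2bound
  -- integrability master lemma
  have master : ∀ (f : EuclideanSpace ℝ (Fin M) → ℝ), Measurable f → ∀ c : ℝ, 0 ≤ c →
      (∀ z ∈ S, |f z| ≤ c * ‖z‖ ^ (2:ℕ)) → IntegrableOn f S ν := by
    intro f hf c hc0 hbound
    refine ⟨hf.aestronglyMeasurable, ?_⟩
    rw [hasFiniteIntegral_iff_norm]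
    calc ∫⁻ z in S, ENNReal.ofReal ‖f z‖ ∂ν
        ≤ ∫⁻ z in S, ENNReal.ofReal c * ENNReal.ofReal (‖z‖ ^ (2:ℝ)) ∂ν := by
          refine setLIntegral_mono (by fun_prop) (fun z hz => ?_)
          rw [← ENNReal.ofReal_mul hc0]
          refine ENNReal.ofReal_le_ofReal ?_
          rw [Real.norm_eq_abs]
          calc |f z| ≤ c * ‖z‖ ^ (2:ℕ) := hbound z hz
          _ = c * ‖z‖ ^ (2:ℝ) := by
              rw [← Real.rpow_natCast ‖z‖ 2]; norm_num
      _ = ENNReal.ofReal c * ∫⁻ z in S, ENNReal.ofReal (‖z‖ ^ (2:ℝ)) ∂ν := by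
          rw [lintegral_const_mul]
          fun_prop
      _ < ⊤ := ENNReal.mul_lt_top ENNReal.ofReal_lt_top (lt_top_iff_ne_top.mpr h2fin)
  -- coordinates measurable
  have hηcoord : ∀ i : Fin N, Measurable fun z => η z i := fun i =>
    ((EuclideanSpace.proj i).continuous.measurable).comp hη
  set Hm := hessianMatrix N φ x with hHmdef
  have hHmval : ∀ i j : Fin N, Hm i j =
      f2 x (EuclideanSpace.single i (1:ℝ)) (EuclideanSpace.single j (1:ℝ)) := by
    intro i j
    show fderiv ℝ (fun y => fderiv ℝ φ y (EuclideanSpace.single j 1)) x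
      (EuclideanSpace.single i 1) = _
    rw [hess_entry φ hφ x]
    rfl
  set Ψ : EuclideanSpace ℝ (Fin M) → ℝ :=
    fun z => φ (x + η z) - φ x - f1 x (η z) with hΨ
  set Q : EuclideanSpace ℝ (Fin M) → ℝ :=
    fun z => (1/2 : ℝ) * f2 x (η z) (η z) with hQ
  have hΨmeas : Measurable Ψ :=
    ((hφ.continuous.measurable.comp (hη.const_add x)).sub measurable_const).sub
      (((f1 x).continuous.measurable).comp hη)
  have hf2cont : Continuous fun h : EuclideanSpace ℝ (Fin N) => f2 x h h :=
    isBoundedBilinearMap_apply.continuous.comp ((f2 x).continuous.prodMk continuous_id)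
  have hQmeas : Measurable Q := (hf2cont.measurable.comp hη).const_mul _
  have hf2norm : ‖f2 x‖ ≤ B₂ := norm_fd2_le φ hB₂ x
  have hquadbound : ∀ h : EuclideanSpace ℝ (Fin N), |f2 x h h| ≤ B₂ * ‖h‖ ^ 2 := by
    intro h
    calc |f2 x h h| ≤ ‖f2 x h‖ * ‖h‖ := by
          rw [← Real.norm_eq_abs]; exact (f2 x h).le_opNorm h
    _ ≤ (‖f2 x‖ * ‖h‖) * ‖h‖ :=
          mul_le_mul_of_nonneg_right ((f2 x).le_opNorm h) (norm_nonneg _)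
    _ ≤ (B₂ * ‖h‖) * ‖h‖ := by
          have := mul_le_mul_of_nonneg_right
            (mul_le_mul_of_nonneg_right hf2norm (norm_nonneg h)) (norm_nonneg h)
          exact this
    _ = B₂ * ‖h‖ ^ 2 := by ring
  -- integrability
  have hΨint : IntegrableOn Ψ S ν := by
    refine master Ψ hΨmeas (B₂ * K ^ 2) (by positivity) (fun z hz => ?_)
    calc |Ψ z| ≤ B₂ * ‖η z‖ ^ 2 := taylor_two_bound φ hφ hB₂ x (η z)
    _ ≤ B₂ * (K * ‖z‖) ^ 2 := by
        have := pow_le_pow_left₀ (norm_nonneg (η z)) (hηS z hz) 2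
        exact mul_le_mul_of_nonneg_left this hB₂0
    _ = B₂ * K ^ 2 * ‖z‖ ^ 2 := by ring
  have hQint : IntegrableOn Q S ν := by
    refine master Q hQmeas (1/2 * (B₂ * K ^ 2)) (by positivity) (fun z hz => ?_)
    calc |Q z| = 1/2 * |f2 x (η z) (η z)| := by
          rw [abs_mul, abs_of_nonneg (by norm_num : (0:ℝ) ≤ 1/2)]
    _ ≤ 1/2 * (B₂ * ‖η z‖ ^ 2) :=
          mul_le_mul_of_nonneg_left (hquadbound (η z)) (by norm_num)
    _ ≤ 1/2 * (B₂ * (K * ‖z‖) ^ 2) := by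
          have := pow_le_pow_left₀ (norm_nonneg (η z)) (hηS z hz) 2
          have := mul_le_mul_of_nonneg_left this hB₂0
          linarith
    _ = 1/2 * (B₂ * K ^ 2) * ‖z‖ ^ 2 := by ring
  have hgint : ∀ i j : Fin N,
      IntegrableOn (fun z => (1/2 * (η z i * η z j)) * Hm j i) S ν := by
    intro i j
    refine master _ ((((hηcoord i).mul (hηcoord j)).const_mul _).mul_const _)
      (1/2 * K ^ 2 * |Hm j i|) (by positivity) (fun z hz => ?_)
    have h1 : |η z i| ≤ K * ‖z‖ := (coord_le _ i).trans (hηS z hz)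
    have h2 : |η z j| ≤ K * ‖z‖ := (coord_le _ j).trans (hηS z hz)
    calc |1/2 * (η z i * η z j) * Hm j i|
        = 1/2 * (|η z i| * |η z j|) * |Hm j i| := by
          rw [abs_mul, abs_mul, abs_mul, abs_of_nonneg (by norm_num : (0:ℝ) ≤ 1/2)]
    _ ≤ 1/2 * ((K * ‖z‖) * (K * ‖z‖)) * |Hm j i| := by
        have hm := mul_le_mul h1 h2 (abs_nonneg _) (by positivity)
        exact mul_le_mul_of_nonneg_right
          (mul_le_mul_of_nonneg_left hm (by norm_num : (0:ℝ) ≤ 1/2)) (abs_nonneg (Hm j i))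
    _ = 1/2 * K ^ 2 * |Hm j i| * ‖z‖ ^ 2 := by ring
  -- trace identity
  have htr : Matrix.trace (smallJumpCov M N η ν δ * Hm) = ∫ z in S, Q z ∂ν := by
    have hentry : ∀ i j : Fin N, smallJumpCov M N η ν δ i j * Hm j i
        = ∫ z in S, (1/2 * (η z i * η z j)) * Hm j i ∂ν := by
      intro i j
      have he : smallJumpCov M N η ν δ i j = 1/2 * ∫ z in S, η z i * η z j ∂ν := rfl
      rw [he, ← integral_const_mul, ← integral_mul_const]
    calc Matrix.trace (smallJumpCov M N η ν δ * Hm)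
        = ∑ i, ∑ j, smallJumpCov M N η ν δ i j * Hm j i := by
          simp [Matrix.trace, Matrix.diag, Matrix.mul_apply]
      _ = ∑ i : Fin N, ∫ z in S, (∑ j : Fin N, (1/2 * (η z i * η z j)) * Hm j i) ∂ν := by
          refine Finset.sum_congr rfl fun i _ => ?_
          rw [integral_finset_sum _ (fun j _ => hgint i j)]
          exact Finset.sum_congr rfl fun j _ => hentry i j
      _ = ∫ z in S, (∑ i : Fin N, ∑ j : Fin N, (1/2 * (η z i * η z j)) * Hm j i) ∂ν := by
          rw [integral_finset_sum _
            (fun i _ => integrable_finset_sum _ (fun j _ => hgint i j))]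
      _ = ∫ z in S, Q z ∂ν := by
          refine integral_congr_ae (Filter.Eventually.of_forall fun z => ?_)
          show (∑ i : Fin N, ∑ j : Fin N, (1/2 * (η z i * η z j)) * Hm j i)
            = (1/2 : ℝ) * f2 x (η z) (η z)
          calc (∑ i : Fin N, ∑ j : Fin N, (1/2 * (η z i * η z j)) * Hm j i)
              = ∑ j : Fin N, ∑ i : Fin N, (1/2 * (η z i * η z j)) * Hm j i :=
                Finset.sum_comm
            _ = (1/2 : ℝ) * f2 x (η z) (η z) := by
                rw [bilin_expand (f2 x) (η z), Finset.mul_sum]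
                refine Finset.sum_congr rfl fun a _ => ?_
                rw [Finset.mul_sum]
                refine Finset.sum_congr rfl fun b _ => ?_
                rw [hHmval a b]
                ring
  -- rewrite the goal
  have key : (∫ z in S, Ψ z ∂ν) - Matrix.trace (smallJumpCov M N η ν δ * Hm)
      = ∫ z in S, (Ψ z - Q z) ∂ν := by
    rw [htr, ← integral_sub hΨint hQint]
  -- third moment bound
  have h3bound := nu_rpow_bound M σ C hσ0 hC ν k hνk hk 3 δ (by linarith) hδ0 hδ1
  have hg3 : IntegrableOn (fun z : EuclideanSpace ℝ (Fin M) => ‖z‖ ^ (3:ℕ)) S ν := by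
    refine master _ (measurable_norm.pow_const 3) 1 (by norm_num) (fun z hz => ?_)
    have hz1 : ‖z‖ ≤ 1 := le_trans hz.2 hδ1.le
    rw [abs_of_nonneg (by positivity)]
    calc ‖z‖ ^ (3:ℕ) = ‖z‖ * ‖z‖ ^ 2 := by ring
    _ ≤ 1 * ‖z‖ ^ 2 := mul_le_mul_of_nonneg_right hz1 (by positivity)
  have hmeas3 : Measurable (fun z : EuclideanSpace ℝ (Fin M) => ‖z‖ ^ (3:ℕ)) :=
    measurable_norm.pow_const 3
  have hintS3 : ∫ z in S, ‖z‖ ^ (3:ℕ) ∂ν ≤ C₂ * δ ^ ((3:ℝ) - σ) * G3.toReal := by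
    rw [integral_eq_lintegral_of_nonneg_ae
      (Filter.Eventually.of_forall fun z => by positivity) hmeas3.aestronglyMeasurable]
    calc (∫⁻ z in S, ENNReal.ofReal (‖z‖ ^ (3:ℕ)) ∂ν).toReal
        ≤ (ENNReal.ofReal (C₂ * δ ^ ((3:ℝ) - σ)) * G3).toReal := by
          apply ENNReal.toReal_mono (ENNReal.mul_ne_top ENNReal.ofReal_ne_top hG3fin)
          calc ∫⁻ z in S, ENNReal.ofReal (‖z‖ ^ (3:ℕ)) ∂ν
              = ∫⁻ z in S, ENNReal.ofReal (‖z‖ ^ ((3:ℝ))) ∂ν := by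
                refine lintegral_congr fun z => ?_
                rw [← Real.rpow_natCast ‖z‖ 3]
                norm_num
            _ ≤ _ := h3bound
      _ = C₂ * δ ^ ((3:ℝ) - σ) * G3.toReal := by
          rw [ENNReal.toReal_mul, ENNReal.toReal_ofReal (by positivity)]
  have hIeq : (∫ z in S, (φ (x + η z) - φ x - f1 x (η z)) ∂ν) = ∫ z in S, Ψ z ∂ν := rfl
  rw [hIeq, key]
  have hg3c : IntegrableOn (fun z : EuclideanSpace ℝ (Fin M) =>
      (B₃ * K ^ 3) * ‖z‖ ^ (3:ℕ)) S ν := hg3.const_mul _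
  calc |∫ z in S, (Ψ z - Q z) ∂ν|
      ≤ ∫ z in S, |Ψ z - Q z| ∂ν := by
        simpa [Real.norm_eq_abs] using
          norm_integral_le_integral_norm (μ := ν.restrict S) (fun z => Ψ z - Q z)
    _ ≤ ∫ z in S, (B₃ * K ^ 3) * ‖z‖ ^ (3:ℕ) ∂ν := by
        refine setIntegral_mono_on ((hΨint.sub hQint).abs) hg3c hSmeas (fun z hz => ?_)
        have hdiff : Ψ z - Q z =
            φ (x + η z) - φ x - f1 x (η z) - (1/2) * f2 x (η z) (η z) := by ring
        rw [hdiff]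
        calc |φ (x + η z) - φ x - f1 x (η z) - (1/2) * f2 x (η z) (η z)|
            ≤ B₃ * ‖η z‖ ^ 3 := taylor_three_bound φ hφ hB₃ x (η z)
          _ ≤ B₃ * (K * ‖z‖) ^ 3 := mul_le_mul_of_nonneg_left
              (pow_le_pow_left₀ (norm_nonneg (η z)) (hηS z hz) 3) hB₃0
          _ = (B₃ * K ^ 3) * ‖z‖ ^ (3:ℕ) := by ring
    _ = (B₃ * K ^ 3) * ∫ z in S, ‖z‖ ^ (3:ℕ) ∂ν := integral_const_mul _ _
    _ ≤ (B₃ * K ^ 3) * (C₂ * δ ^ ((3:ℝ) - σ) * G3.toReal) :=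
        mul_le_mul_of_nonneg_left hintS3 (by positivity)
    _ ≤ (K ^ 3 * C₂ * G3.toReal + 1) * B₃ * δ ^ (3 - σ) := by
        have h1 : (0:ℝ) ≤ δ ^ ((3:ℝ) - σ) := Real.rpow_nonneg hδ0.le _
        have e : (B₃ * K ^ 3) * (C₂ * δ ^ ((3:ℝ) - σ) * G3.toReal)
            = (K ^ 3 * C₂ * G3.toReal) * B₃ * δ ^ ((3:ℝ) - σ) := by ring
        rw [e]
        apply mul_le_mul_of_nonneg_right _ h1
        apply mul_le_mul_of_nonneg_right _ hB₃0
        linarith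
end
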